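/- Let n ≥ 2 and A ∈ Mₙ(ℂ) with singular value decomposition A = Σᵢ σᵢ xᵢ yᵢ*, σ₁ ≥ σ₂ ≥ ⋯ ≥ 0, and rk A ≥ 2. If some vector x ∈ ℂⁿ is not orthogonal to x₂, then B := x y₂* satisfies A ⊥ B but not B ⊥ A (Birkhoff–James). -/

import Mathlib

open Matrix

/-- The operator (spectral) norm of a complex matrix, induced by the Euclidean norm on `ℂⁿ`. -/
noncomputable def opNorm {n : ℕ} (A : Matrix (Fin n) (Fin n) ℂ) : ℝ :=
  ‖Matrix.toEuclideanCLM (𝕜 := ℂ) (n := Fin n) A‖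

/-- Birkhoff–James orthogonality of matrices with respect to the operator norm. -/
def BJ {n : ℕ} (A B : Matrix (Fin n) (Fin n) ℂ) : Prop :=
  ∀ c : ℂ, opNorm A ≤ opNorm (A + c • B)

/-- The canonical linear equivalence between `Fin n → ℂ` and Euclidean space. -/
noncomputable def eE (n : ℕ) : (Fin n → ℂ) ≃ₗ[ℂ] EuclideanSpace ℂ (Fin n) :=
  (WithLp.linearEquiv 2 ℂ (Fin n → ℂ)).symm

lemma eE_CLM {n : ℕ} (M : Matrix (Fin n) (Fin n) ℂ) (w : Fin n → ℂ) :
    Matrix.toEuclideanCLM (𝕜 := ℂ) M (eE n w) = eE n (M *ᵥ w) := rfl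

lemma eE_inner {n : ℕ} (a b : Fin n → ℂ) :
    (inner ℂ (eE n a) (eE n b) : ℂ) = star a ⬝ᵥ b := by
  simp [eE, PiLp.inner_apply, dotProduct, mul_comm]

lemma vecMulVec_mulVec' {n : ℕ} (u w z : Fin n → ℂ) :
    Matrix.vecMulVec u w *ᵥ z = (w ⬝ᵥ z) • u := by
  funext j
  simp only [Matrix.mulVec, dotProduct, Matrix.vecMulVec_apply, Pi.smul_apply,
    smul_eq_mul, Finset.sum_mul]
  exact Finset.sum_congr rfl fun k _ => by ring

lemma norm_sum_orthonormal {E : Type*} [NormedAddCommGroup E] [InnerProductSpace ℂ E]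
    {ι : Type*} {X : ι → E} (hX : Orthonormal ℂ X) (c : ι → ℂ) (s : Finset ι) :
    ‖∑ i ∈ s, c i • X i‖ ^ 2 = ∑ i ∈ s, ‖c i‖ ^ 2 := by
  have h := hX.inner_sum c c s
  rw [inner_self_eq_norm_sq_to_K] at h
  have h2 : ∑ i ∈ s, (starRingEnd ℂ) (c i) * c i = ((∑ i ∈ s, ‖c i‖ ^ 2 : ℝ) : ℂ) := by
    push_cast
    exact Finset.sum_congr rfl fun i _ => Complex.conj_mul' (c i)
  rw [h2, ← RCLike.ofReal_pow] at h
  exact RCLike.ofReal_inj.mp h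

lemma cs_two {a k α s r : ℝ} (hα : 0 ≤ α) (hs : 0 ≤ s)
    (hr : 0 ≤ r) (h : α ^ 2 + s ^ 2 ≤ r ^ 2) :
    a * α + k * s ≤ Real.sqrt (a ^ 2 + k ^ 2) * r := by
  have hQ : 0 ≤ Real.sqrt (a ^ 2 + k ^ 2) := Real.sqrt_nonneg _
  have hQ2 : Real.sqrt (a ^ 2 + k ^ 2) ^ 2 = a ^ 2 + k ^ 2 :=
    Real.sq_sqrt (by positivity)
  nlinarith [sq_nonneg (a * s - k * α), sq_nonneg (a * α + k * s - Real.sqrt (a ^ 2 + k ^ 2) * r),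
    mul_nonneg hQ hr]

lemma sum_mulVec' {n : ℕ} (f : Fin n → Matrix (Fin n) (Fin n) ℂ) (w : Fin n → ℂ) :
    (∑ i, f i) *ᵥ w = ∑ i, f i *ᵥ w := by
  let L : Matrix (Fin n) (Fin n) ℂ →ₗ[ℂ] (Fin n → ℂ) :=
    { toFun := fun M => M *ᵥ w
      map_add' := fun M N => Matrix.add_mulVec M N w
      map_smul' := fun c M => Matrix.smul_mulVec c M w }
  exact map_sum L f Finset.univ

set_option maxHeartbeats 1000000 in
/-- Given an SVD `A = Σ σᵢ xᵢ yᵢ*` with `rk A ≥ 2` and a vector `v` not orthogonal to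
`x₂`, the matrix `B = v y₂*` satisfies `A ⊥ B` but not `B ⊥ A`. -/
theorem stmt11 {n : ℕ} (hn : 2 ≤ n) (σ : Fin n → ℝ) (x y : Fin n → Fin n → ℂ)
    (hx : ∀ i j, dotProduct (star (x i)) (x j) = if i = j then 1 else 0)
    (hy : ∀ i j, dotProduct (star (y i)) (y j) = if i = j then 1 else 0)
    (hmono : Antitone σ) (hpos : ∀ i, 0 ≤ σ i)
    (A : Matrix (Fin n) (Fin n) ℂ)
    (hA : A = ∑ i, (σ i : ℂ) • Matrix.vecMulVec (x i) (star (y i)))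
    (hrk : 2 ≤ A.rank)
    (v : Fin n → ℂ)
    (hv : dotProduct (star (x ⟨1, by omega⟩)) v ≠ 0) :
    BJ A (Matrix.vecMulVec v (star (y ⟨1, by omega⟩))) ∧
      ¬ BJ (Matrix.vecMulVec v (star (y ⟨1, by omega⟩))) A := by
  have h0n : (0:ℕ) < n := by omega
  have h1n : (1:ℕ) < n := by omega
  set i0 : Fin n := ⟨0, h0n⟩ with hi0def
  set i1 : Fin n := ⟨1, h1n⟩ with hi1def
  have hi01 : i0 ≠ i1 := by simp [hi0def, hi1def, Fin.ext_iff]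
  set B := Matrix.vecMulVec v (star (y i1)) with hBdef
  -- orthonormality in Euclidean space
  have hXon : Orthonormal ℂ (fun i => eE n (x i)) := by
    rw [orthonormal_iff_ite]
    intro i j
    rw [eE_inner]
    simpa using hx i j
  have hYon : Orthonormal ℂ (fun i => eE n (y i)) := by
    rw [orthonormal_iff_ite]
    intro i j
    rw [eE_inner]
    simpa using hy i j
  have hnx : ∀ i, ‖eE n (x i)‖ = 1 := hXon.1
  have hny : ∀ i, ‖eE n (y i)‖ = 1 := hYon.1
  -- mulVec formulas
  have hAmul : ∀ w : Fin n → ℂ, A *ᵥ w = ∑ i, ((σ i : ℂ) * (star (y i) ⬝ᵥ w)) • x i := by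
    intro w
    rw [hA, sum_mulVec']
    refine Finset.sum_congr rfl fun i _ => ?_
    rw [Matrix.smul_mulVec, vecMulVec_mulVec', smul_smul]
  have hBmul : ∀ w : Fin n → ℂ, B *ᵥ w = (star (y i1) ⬝ᵥ w) • v := fun w =>
    vecMulVec_mulVec' v (star (y i1)) w
  -- σ's ordering
  have hσ0 : ∀ i, σ i ≤ σ i0 := fun i => hmono (by simp [hi0def, Fin.le_def])
  -- upper bound for ‖A‖
  have hAnorm : opNorm A ≤ σ i0 := by
    show ‖Matrix.toEuclideanCLM (𝕜 := ℂ) (n := Fin n) A‖ ≤ σ i0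
    refine ContinuousLinearMap.opNorm_le_bound _ (hpos i0) fun z => ?_
    obtain ⟨w, rfl⟩ : ∃ w, eE n w = z := ⟨(eE n).symm z, (eE n).apply_symm_apply z⟩
    rw [eE_CLM, hAmul, map_sum]
    simp_rw [_root_.map_smul]
    have hns := norm_sum_orthonormal hXon (fun i => (σ i : ℂ) * (star (y i) ⬝ᵥ w)) Finset.univ
    have hbes := hYon.sum_inner_products_le (s := Finset.univ) (x := eE n w)
    have hb2 : ∑ i, ‖(σ i : ℂ) * (star (y i) ⬝ᵥ w)‖ ^ 2 ≤ (σ i0) ^ 2 * ‖eE n w‖ ^ 2 := by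
      calc ∑ i, ‖(σ i : ℂ) * (star (y i) ⬝ᵥ w)‖ ^ 2
          ≤ ∑ i, (σ i0) ^ 2 * ‖star (y i) ⬝ᵥ w‖ ^ 2 := by
            refine Finset.sum_le_sum fun i _ => ?_
            rw [norm_mul, mul_pow, Complex.norm_real, Real.norm_eq_abs, abs_of_nonneg (hpos i)]
            exact mul_le_mul_of_nonneg_right (by nlinarith [hpos i, hσ0 i]) (sq_nonneg _)
        _ = (σ i0) ^ 2 * ∑ i, ‖(inner ℂ (eE n (y i)) (eE n w) : ℂ)‖ ^ 2 := by
            rw [Finset.mul_sum]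
            exact Finset.sum_congr rfl fun i _ => by rw [eE_inner]
        _ ≤ (σ i0) ^ 2 * ‖eE n w‖ ^ 2 :=
            mul_le_mul_of_nonneg_left hbes (by positivity)
    have hfin : ‖∑ i, ((σ i : ℂ) * (star (y i) ⬝ᵥ w)) • eE n (x i)‖ ^ 2
        ≤ (σ i0 * ‖eE n w‖) ^ 2 := by
      rw [hns, mul_pow]; exact hb2
    nlinarith [norm_nonneg (∑ i, ((σ i : ℂ) * (star (y i) ⬝ᵥ w)) • eE n (x i)),
      mul_nonneg (hpos i0) (norm_nonneg (eE n w))]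
  -- A *ᵥ y 0 = σ0 • x 0
  have hAy0 : A *ᵥ y i0 = ((σ i0 : ℂ)) • x i0 := by
    rw [hAmul]
    rw [Finset.sum_eq_single i0]
    · rw [hy i0 i0]; simp
    · intro i _ hi
      rw [hy i i0, if_neg hi]
      simp
    · simp
  -- part 1 : BJ A B
  have part1 : BJ A B := by
    intro c
    refine le_trans hAnorm ?_
    have hmul : (A + c • B) *ᵥ y i0 = ((σ i0 : ℂ)) • x i0 := by
      rw [Matrix.add_mulVec, Matrix.smul_mulVec, hBmul, hAy0, hy i1 i0,
        if_neg (Ne.symm hi01)]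
      simp
    have := (Matrix.toEuclideanCLM (𝕜 := ℂ) (A + c • B)).le_opNorm (eE n (y i0))
    rw [eE_CLM, hmul, hny i0, mul_one, _root_.map_smul, norm_smul] at this
    rw [hnx i0, mul_one, Complex.norm_real, Real.norm_eq_abs, abs_of_nonneg (hpos i0)] at this
    exact this
  refine ⟨part1, ?_⟩
  -- σ1 > 0
  have hσ1 : 0 < σ i1 := by
    rcases (hpos i1).lt_or_eq with h | h
    · exact h
    exfalso
    have hzero : ∀ i, i ≠ i0 → σ i = 0 := by
      intro i hi
      have h1le : i1 ≤ i := by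
        rw [Fin.le_def]
        have : i.val ≠ 0 := fun h0 => hi (Fin.ext h0)
        simpa [hi1def] using Nat.one_le_iff_ne_zero.mpr this
      exact le_antisymm (h ▸ hmono h1le) (hpos i)
    have hrange : LinearMap.range A.mulVecLin ≤ ℂ ∙ (x i0) := by
      rintro _ ⟨w, rfl⟩
      rw [Matrix.mulVecLin_apply, hAmul w, Finset.sum_eq_single i0]
      · exact Submodule.smul_mem _ _ (Submodule.mem_span_singleton_self _)
      · intro i _ hi
        rw [hzero i hi]
        simp
      · simp
    have hx0ne : x i0 ≠ 0 := by
      intro h0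
      have := hx i0 i0
      rw [h0] at this
      simp at this
    have hle : A.rank ≤ 1 := by
      rw [Matrix.rank]
      calc Module.finrank ℂ (LinearMap.range A.mulVecLin)
          ≤ Module.finrank ℂ (ℂ ∙ (x i0)) := Submodule.finrank_mono hrange
        _ = 1 := finrank_span_singleton hx0ne
    omega
  -- counterexample scalar
  set p : ℂ := star (x i1) ⬝ᵥ v with hpdef
  have hp : p ≠ 0 := hv
  have hP : 0 < ‖p‖ := norm_pos_iff.mpr hp
  set t : ℝ := σ i1 / (σ i0 ^ 2 + σ i1 ^ 2) with htdef
  have hden : 0 < σ i0 ^ 2 + σ i1 ^ 2 := by positivity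
  have ht : 0 < t := div_pos hσ1 hden
  have htc : t * (σ i0 ^ 2 + σ i1 ^ 2) = σ i1 := div_mul_cancel₀ _ (ne_of_gt hden)
  set c : ℂ := -(t : ℂ) * p with hcdef
  have hcnorm : ‖c‖ = t * ‖p‖ := by
    rw [hcdef, norm_mul, norm_neg, Complex.norm_real, Real.norm_eq_abs, abs_of_pos ht]
  set V : ℝ := ‖eE n v‖ with hVdef
  set u0 : EuclideanSpace ℂ (Fin n) := eE n v + (c * (σ i1 : ℂ)) • eE n (x i1) with hu0def
  set a : ℝ := ‖u0‖ with hadef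
  have hinner_vx : (inner ℂ (eE n v) (eE n (x i1)) : ℂ) = (starRingEnd ℂ) p := by
    rw [eE_inner, hpdef]
    simp [dotProduct, map_sum, mul_comm]
  have ha2 : a ^ 2 = V ^ 2 - 2 * t * σ i1 * ‖p‖ ^ 2 + t ^ 2 * ‖p‖ ^ 2 * σ i1 ^ 2 := by
    have h1 : (c * (σ i1 : ℂ)) * (starRingEnd ℂ) p = ((-(t * σ i1 * ‖p‖ ^ 2) : ℝ) : ℂ) := by
      rw [hcdef]
      push_cast
      linear_combination (-(t : ℂ) * ((σ i1 : ℝ) : ℂ)) * Complex.conj_mul' p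
    rw [hadef, hu0def, @norm_add_sq ℂ, inner_smul_right, hinner_vx, h1]
    rw [norm_smul, hnx i1, mul_one, norm_mul, hcnorm, Complex.norm_real, Real.norm_eq_abs,
      abs_of_nonneg (hpos i1)]
    simp only [RCLike.re_to_complex, Complex.ofReal_re]
    ring
  -- lower bound for ‖B‖
  have hV : V ≤ opNorm B := by
    have hb := (Matrix.toEuclideanCLM (𝕜 := ℂ) B).le_opNorm (eE n (y i1))
    rw [eE_CLM, hBmul, hy i1 i1, if_pos rfl, one_smul, hny i1, mul_one] at hb
    exact hb
  have hVpos : 0 < V := by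
    rcases (norm_nonneg (eE n v)).lt_or_eq with h | h
    · exact h
    exfalso
    have h0 : eE n v = 0 := by rw [← norm_eq_zero]; exact h.symm
    rw [h0, inner_zero_left] at hinner_vx
    exact hp (by simpa using (congrArg (starRingEnd ℂ) hinner_vx).symm)
  -- the norm bound for B + c • A
  set R : ℝ := Real.sqrt (a ^ 2 + (t * ‖p‖ * σ i0) ^ 2) with hRdef
  have hub : opNorm (B + c • A) ≤ R := by
    show ‖Matrix.toEuclideanCLM (𝕜 := ℂ) (n := Fin n) (B + c • A)‖ ≤ R
    refine ContinuousLinearMap.opNorm_le_bound _ (Real.sqrt_nonneg _) fun z => ?_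
    obtain ⟨w, rfl⟩ : ∃ w, eE n w = z := ⟨(eE n).symm z, (eE n).apply_symm_apply z⟩
    rw [eE_CLM]
    set α : ℂ := star (y i1) ⬝ᵥ w with hαdef
    have hmw : (B + c • A) *ᵥ w
        = α • v + c • ∑ i, ((σ i : ℂ) * (star (y i) ⬝ᵥ w)) • x i := by
      rw [Matrix.add_mulVec, Matrix.smul_mulVec, hBmul, hAmul]
    rw [hmw]
    have hsplit : (∑ i, ((σ i : ℂ) * (star (y i) ⬝ᵥ w)) • x i)
        = ((σ i1 : ℂ) * α) • x i1
          + ∑ i ∈ Finset.univ.erase i1, ((σ i : ℂ) * (star (y i) ⬝ᵥ w)) • x i :=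
      (Finset.add_sum_erase _ _ (Finset.mem_univ i1)).symm
    have hvec : α • v + c • ∑ i, ((σ i : ℂ) * (star (y i) ⬝ᵥ w)) • x i
        = α • (v + (c * (σ i1 : ℂ)) • x i1)
          + c • ∑ i ∈ Finset.univ.erase i1, ((σ i : ℂ) * (star (y i) ⬝ᵥ w)) • x i := by
      rw [hsplit, smul_add, smul_add, smul_smul, smul_smul]
      rw [show c * ((σ i1 : ℂ) * α) = α * (c * (σ i1 : ℂ)) from by ring]
      abel
    have himg : eE n (α • v + c • ∑ i, ((σ i : ℂ) * (star (y i) ⬝ᵥ w)) • x i)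
        = α • u0 + c • ∑ i ∈ Finset.univ.erase i1,
            ((σ i : ℂ) * (star (y i) ⬝ᵥ w)) • eE n (x i) := by
      rw [hvec]
      simp only [map_add, _root_.map_smul, map_sum, hu0def]
    rw [himg]
    set S := ∑ i ∈ Finset.univ.erase i1, ((σ i : ℂ) * (star (y i) ⬝ᵥ w)) • eE n (x i) with hSdef
    set s2 : ℝ := ∑ i ∈ Finset.univ.erase i1, ‖star (y i) ⬝ᵥ w‖ ^ 2 with hs2def
    have hs2nn : 0 ≤ s2 := Finset.sum_nonneg fun i _ => sq_nonneg _
    have hnormS : ‖S‖ ^ 2 ≤ σ i0 ^ 2 * s2 := by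
      rw [hSdef, norm_sum_orthonormal hXon, hs2def, Finset.mul_sum]
      refine Finset.sum_le_sum fun i _ => ?_
      rw [norm_mul, mul_pow, Complex.norm_real, Real.norm_eq_abs, abs_of_nonneg (hpos i)]
      exact mul_le_mul_of_nonneg_right (by nlinarith [hpos i, hσ0 i]) (sq_nonneg _)
    have hbessel : ‖α‖ ^ 2 + s2 ≤ ‖eE n w‖ ^ 2 := by
      have hbes := hYon.sum_inner_products_le (s := Finset.univ) (x := eE n w)
      have hsum : ‖α‖ ^ 2 + s2 = ∑ i, ‖(inner ℂ (eE n (y i)) (eE n w) : ℂ)‖ ^ 2 := by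
        rw [hαdef, hs2def]
        simp only [eE_inner]
        exact Finset.add_sum_erase Finset.univ (fun i => ‖star (y i) ⬝ᵥ w‖ ^ 2) (Finset.mem_univ i1)
      rw [hsum]
      exact hbes
    have hSle : ‖S‖ ≤ σ i0 * Real.sqrt s2 := by
      have h0 : (σ i0 * Real.sqrt s2) ^ 2 = σ i0 ^ 2 * s2 := by
        rw [mul_pow, Real.sq_sqrt hs2nn]
      nlinarith [norm_nonneg S, mul_nonneg (hpos i0) (Real.sqrt_nonneg s2)]
    have h1 : ‖α • u0 + c • S‖ ≤ a * ‖α‖ + (t * ‖p‖ * σ i0) * Real.sqrt s2 := by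
      refine (norm_add_le _ _).trans ?_
      rw [norm_smul, norm_smul, hcnorm]
      calc ‖α‖ * ‖u0‖ + t * ‖p‖ * ‖S‖
          ≤ ‖α‖ * ‖u0‖ + t * ‖p‖ * (σ i0 * Real.sqrt s2) := by
            refine add_le_add le_rfl ?_
            exact mul_le_mul_of_nonneg_left hSle (by positivity)
        _ = a * ‖α‖ + (t * ‖p‖ * σ i0) * Real.sqrt s2 := by rw [hadef]; ring
    refine h1.trans ?_
    exact cs_two (norm_nonneg α) (Real.sqrt_nonneg s2) (norm_nonneg (eE n w))
      (by rw [Real.sq_sqrt hs2nn]; exact hbessel)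
  -- R < V
  have hR2 : a ^ 2 + (t * ‖p‖ * σ i0) ^ 2 = V ^ 2 - t * σ i1 * ‖p‖ ^ 2 := by
    rw [ha2]
    linear_combination (t * ‖p‖ ^ 2) * htc
  have hRV : R < V := by
    rw [hRdef, hR2]
    refine (Real.sqrt_lt' hVpos).mpr ?_
    nlinarith [mul_pos (mul_pos ht hσ1) (pow_pos hP 2)]
  intro hBJ
  have hle := hBJ c
  linarith
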